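/- In any Markov-perfect equilibrium of the main model, for each fixed (z,k) the map b ↦ V(z,b,k) is strictly decreasing on [b̲(z,k), b̄(z,k)]; moreover V(z,b₂,k) − V(z,b₁,k) ≥ b₁ − b₂ for any b₁ > b₂ with b₁,b₂ ∈ [b̲(z,k), b̄(z,k)]. -/

import Mathlib

open MeasureTheory Set

/-- The main trade-off model of defaultable corporate debt and investment:
production `F(z,k) = z A k^α`, tax rate `τ`, depreciation `δ`, risk-free rate `ρ`,
discount factor `β`, debt bounds `b̲ ≤ 0 ≤ b̄`, non-decreasing liquidation value `L`,
and a time-homogeneous Markov shock on a bounded state space `Z ⊆ [0, z̄]` whose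
transitions are given by the kernel `μ`. -/
structure TradeoffModel where
  A : ℝ
  α : ℝ
  τ : ℝ
  δ : ℝ
  ρ : ℝ
  β : ℝ
  bLow : ℝ
  bHigh : ℝ
  L : ℝ → ℝ
  zbar : ℝ
  Z : Set ℝ
  μ : ℝ → Measure ℝ
  hA : 0 < A
  hα : α ∈ Ioo (0 : ℝ) 1
  hτ : τ ∈ Ico (0 : ℝ) 1
  hδ : δ ∈ Ioo (0 : ℝ) 1
  hρ : ρ ∈ Ioo (0 : ℝ) 1
  hβ : β ∈ Ioo (0 : ℝ) 1
  hbLow : bLow ≤ 0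
  hbHigh : 0 ≤ bHigh
  hLmono : Monotone L
  hLnonneg : ∀ k, 0 ≤ L k
  hzbar : 0 < zbar
  hZ : Z ⊆ Icc 0 zbar
  hZne : Z.Nonempty
  hprob : ∀ z, IsProbabilityMeasure (μ z)
  hsupp : ∀ z, μ z Z = 1

namespace TradeoffModel

variable (M : TradeoffModel)

/-- Production function `F(z,k) = z A k^α`. -/
noncomputable def F (z k : ℝ) : ℝ := z * M.A * k ^ M.α

/-- Conditional expectation `E_z W(z', b', k')` of a next-period value. -/
noncomputable def EV (W : ℝ → ℝ → ℝ → ℝ) (z b' k' : ℝ) : ℝ :=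
  ∫ z', W z' b' k' ∂(M.μ z)

/-- Survival probability `P_z(W(z',b',k') > 0)`. -/
noncomputable def Psurv (W : ℝ → ℝ → ℝ → ℝ) (z b' k' : ℝ) : ℝ :=
  (M.μ z {z' | 0 < W z' b' k'}).toReal

/-- Default probability `P_z(W(z',b',k') = 0)`. -/
noncomputable def Pdef (W : ℝ → ℝ → ℝ → ℝ) (z b' k' : ℝ) : ℝ :=
  (M.μ z {z' | W z' b' k' = 0}).toReal

/-- Per-period net resources `R(z,k) = (1-τ)F(z,k) + [1-δ(1-τ)]k`. -/
noncomputable def R (z k : ℝ) : ℝ :=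
  (1 - M.τ) * M.F z k + (1 - M.δ * (1 - M.τ)) * k

/-- Maximal net debt revenue
`S(z,k) = sup {[τ+(1-τ)q(z,b',k')]b' - k' : b' ∈ [b̲,b̄], k' ≥ (1-δ)k}`. -/
noncomputable def S (q : ℝ → ℝ → ℝ → ℝ) (z k : ℝ) : ℝ :=
  sSup {s | ∃ b' k', b' ∈ Icc M.bLow M.bHigh ∧ (1 - M.δ) * k ≤ k' ∧
    s = (M.τ + (1 - M.τ) * q z b' k') * b' - k'}

/-- The feasible (non-default) states `X_feas`. -/
def Feas (q : ℝ → ℝ → ℝ → ℝ) (x : ℝ × ℝ × ℝ) : Prop :=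
  x.1 ∈ M.Z ∧ x.2.1 ∈ Icc M.bLow M.bHigh ∧ 0 ≤ x.2.2 ∧
    x.2.1 ≤ M.R x.1 x.2.2 + M.S q x.1 x.2.2

/-- Feasibility of a policy `p = (b', d, i)` at the state `x = (z, b, k)`,
given the price function `q`: debt bounds, nonnegative dividend and investment,
and the flow budget constraint with `k' = (1-δ)k + i`. -/
def PolicyFeasible (q : ℝ → ℝ → ℝ → ℝ) (x p : ℝ × ℝ × ℝ) : Prop :=
  p.1 ∈ Icc M.bLow M.bHigh ∧ 0 ≤ p.2.1 ∧ 0 ≤ p.2.2 ∧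
    (1 - M.τ) * M.F x.1 x.2.2 + M.τ * M.δ * x.2.2 +
      (M.τ + (1 - M.τ) * q x.1 p.1 ((1 - M.δ) * x.2.2 + p.2.2)) * p.1 - x.2.1
      = p.2.1 + p.2.2

/-- Payoff `d + β E_z V(z', b', k')` of policy `p = (b', d, i)` at state
`x = (z, b, k)` with continuation value `V`. -/
noncomputable def Payoff (V : ℝ → ℝ → ℝ → ℝ) (x p : ℝ × ℝ × ℝ) : ℝ :=
  p.2.1 + M.β * M.EV V x.1 p.1 ((1 - M.δ) * x.2.2 + p.2.2)

/-- The firm's Bellman equation: at every feasible state the value is the supremum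
of policy payoffs and the supremum is attained; at infeasible states the value is `0`. -/
def SatisfiesBellman (V q : ℝ → ℝ → ℝ → ℝ) : Prop :=
  ∀ x : ℝ × ℝ × ℝ,
    (M.Feas q x →
      V x.1 x.2.1 x.2.2 =
        sSup {v | ∃ p, M.PolicyFeasible q x p ∧ v = M.Payoff V x p} ∧
      ∃ p, M.PolicyFeasible q x p ∧ M.Payoff V x p = V x.1 x.2.1 x.2.2) ∧
    (¬ M.Feas q x → V x.1 x.2.1 x.2.2 = 0)

/-- The investor break-even condition for the bond price `q`, given the value `V`. -/
def BreakEven (q V : ℝ → ℝ → ℝ → ℝ) : Prop :=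
  ∀ z b' k',
    (b' ≤ 0 → q z b' k' = 1 / (1 + M.ρ)) ∧
    (0 < b' →
      q z b' k' =
        (b' * M.Psurv V z b' k' + M.L k' * M.Pdef V z b' k') / (b' * (1 + M.ρ)) ∧
      q z b' k' ≤ 1 / (1 + M.ρ))

/-- Boundedness of a function of three real variables. -/
def Bounded3 (f : ℝ → ℝ → ℝ → ℝ) : Prop := ∃ C, ∀ z b k, |f z b k| ≤ C

/-- Measurability of a function of three real variables. -/
def Measurable3 (f : ℝ → ℝ → ℝ → ℝ) : Prop :=
  Measurable fun x : ℝ × ℝ × ℝ => f x.1 x.2.1 x.2.2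

/-- A Markov-perfect equilibrium: a pair `(V, q)` of bounded measurable functions
such that `V` solves the Bellman equation (with attained suprema) given `q`, and
`q` satisfies the investor break-even condition given `V`. -/
def IsEquilibrium (V q : ℝ → ℝ → ℝ → ℝ) : Prop :=
  Bounded3 V ∧ Measurable3 V ∧ Bounded3 q ∧ Measurable3 q ∧
    M.SatisfiesBellman V q ∧ M.BreakEven q V

/-- Lowest feasible debt level `b̲(z,k) = inf {b ≥ b̲ : (z,b,k) ∈ X_feas}`. -/
noncomputable def bLowFn (q : ℝ → ℝ → ℝ → ℝ) (z k : ℝ) : ℝ :=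
  sInf {b | M.bLow ≤ b ∧ M.Feas q (z, b, k)}

/-- Highest feasible debt level `b̄(z,k) = sup {b ≤ b̄ : (z,b,k) ∈ X_feas}`. -/
noncomputable def bHighFn (q : ℝ → ℝ → ℝ → ℝ) (z k : ℝ) : ℝ :=
  sSup {b | b ≤ M.bHigh ∧ M.Feas q (z, b, k)}

/-- Dual objective
`G(z,k;b',d,i) = (1-τ)F(z,k) + τδk - d - i + τb' + ((1-τ)/(1+ρ))·[...]`,
where the bracket is `b'` if `b' ≤ 0` and
`b'·P_z(W > 0) + L(k')·P_z(W = 0)` if `b' > 0`, with `k' = (1-δ)k + i`. -/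
noncomputable def Gobj (W : ℝ → ℝ → ℝ → ℝ) (z k b' d i : ℝ) : ℝ :=
  (1 - M.τ) * M.F z k + M.τ * M.δ * k - d - i + M.τ * b' +
    (1 - M.τ) / (1 + M.ρ) *
      (if b' ≤ 0 then b'
       else b' * M.Psurv W z b' ((1 - M.δ) * k + i) +
         M.L ((1 - M.δ) * k + i) * M.Pdef W z b' ((1 - M.δ) * k + i))

/-- The dual value `B̂(z,k,v)`: the supremum of the dual objective over policies
`(b',d,i)` satisfying the dual constraints. -/
noncomputable def Bhat (V : ℝ → ℝ → ℝ → ℝ) (z k v : ℝ) : ℝ :=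
  sSup {b | ∃ b' d i : ℝ, b' ∈ Icc M.bLow M.bHigh ∧ 0 ≤ d ∧ 0 ≤ i ∧
    0 ≤ M.Gobj V z k b' d i ∧
    v = d + M.β * M.EV V z b' ((1 - M.δ) * k + i) ∧
    b = M.Gobj V z k b' d i}

/-- The dual operator `T`: `(Tf)(z,k,v)` is the supremum of the dual objective over
policies `(b',d,i)` and nonnegative auxiliary continuation functions `w`, subject to
the dual constraints and `b' ≤ f(z',k',w(z',b',k'))` for all `z'`. -/
noncomputable def Tdual (f : ℝ → ℝ → ℝ → ℝ) (z k v : ℝ) : ℝ :=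
  sSup {r | ∃ (b' d i : ℝ) (w : ℝ → ℝ → ℝ → ℝ),
    b' ∈ Icc M.bLow M.bHigh ∧ 0 ≤ d ∧ 0 ≤ i ∧
    (∀ z' b k, 0 ≤ w z' b k) ∧
    0 ≤ M.Gobj w z k b' d i ∧
    v = d + M.β * M.EV w z b' ((1 - M.δ) * k + i) ∧
    (∀ z', b' ≤ f z' ((1 - M.δ) * k + i) (w z' b' ((1 - M.δ) * k + i))) ∧
    r = M.Gobj w z k b' d i}

/-- Maximal bond-issuing revenue `N(z,k') = max_{0 ≤ b' ≤ b̄} [τ+(1-τ)q(z,b',k')-β]b'`. -/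
noncomputable def Nfun (q : ℝ → ℝ → ℝ → ℝ) (z k' : ℝ) : ℝ :=
  sSup {n | ∃ b' ∈ Icc (0 : ℝ) M.bHigh, n = (M.τ + (1 - M.τ) * q z b' k' - M.β) * b'}

end TradeoffModel

/-- In any Markov-perfect equilibrium, for each fixed `(z,k)` the map
`b ↦ V(z,b,k)` is strictly decreasing on `[b̲(z,k), b̄(z,k)]`, and moreover
`V(z,b₂,k) - V(z,b₁,k) ≥ b₁ - b₂` whenever `b₁ > b₂` in that interval. -/
theorem value_strictly_decreasing_in_debt (M : TradeoffModel)
    (V q : ℝ → ℝ → ℝ → ℝ) (hEq : M.IsEquilibrium V q) (z k : ℝ) :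
    StrictAntiOn (fun b => V z b k) (Set.Icc (M.bLowFn q z k) (M.bHighFn q z k)) ∧
    ∀ b₁ b₂ : ℝ, b₁ ∈ Set.Icc (M.bLowFn q z k) (M.bHighFn q z k) →
      b₂ ∈ Set.Icc (M.bLowFn q z k) (M.bHighFn q z k) → b₂ < b₁ →
      b₁ - b₂ ≤ V z b₂ k - V z b₁ k := by
  obtain ⟨⟨Cv, hCv⟩, _, ⟨Cq, hCq⟩, _, hBell, _⟩ := hEq
  have hCv0 : 0 ≤ Cv := le_trans (abs_nonneg _) (hCv 0 0 0)
  have hCq0 : 0 ≤ Cq := le_trans (abs_nonneg _) (hCq 0 0 0)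
  have hβ0 : 0 ≤ M.β := le_of_lt M.hβ.1
  have hEVb : ∀ z₀ b' k', |M.EV V z₀ b' k'| ≤ Cv := by
    intro z₀ b' k'
    have hprob := M.hprob z₀
    have h := MeasureTheory.norm_integral_le_of_norm_le_const
      (μ := M.μ z₀) (f := fun z' => V z' b' k') (C := Cv)
      (Filter.Eventually.of_forall fun z' => by
        simpa [Real.norm_eq_abs] using hCv z' b' k')
    simpa [TradeoffModel.EV, Real.norm_eq_abs, measure_univ] using h
  -- key monotonicity lemma
  have key : ∀ b₁ b₂ : ℝ, M.Feas q (z, b₁, k) → M.Feas q (z, b₂, k) → b₂ < b₁ →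
      b₁ - b₂ ≤ V z b₂ k - V z b₁ k := by
    intro b₁ b₂ h1 h2 hlt
    obtain ⟨_, p, hpf, hpay⟩ := (hBell (z, b₁, k)).1 h1
    obtain ⟨hV2, _⟩ := (hBell (z, b₂, k)).1 h2
    have hbdd : BddAbove {v | ∃ p, M.PolicyFeasible q (z, b₂, k) p ∧
        v = M.Payoff V (z, b₂, k) p} := by
      refine ⟨(1 - M.τ) * M.F z k + M.τ * M.δ * k +
        (|M.τ| + |1 - M.τ| * Cq) * (|M.bLow| + |M.bHigh|) - b₂ + M.β * Cv, ?_⟩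
      rintro v ⟨p', hp', rfl⟩
      obtain ⟨⟨hbl, hbh⟩, hd, hi, hbud⟩ := hp'
      have hb'abs : |p'.1| ≤ |M.bLow| + |M.bHigh| := by
        rw [abs_le]
        constructor
        · have h1 := neg_abs_le M.bLow
          have h2 := abs_nonneg M.bHigh
          linarith
        · have h1 := le_abs_self M.bHigh
          have h2 := abs_nonneg M.bLow
          linarith
      set k' := (1 - M.δ) * (z, b₂, k).2.2 + p'.2.2 with hk'
      have hQ : |M.τ + (1 - M.τ) * q z p'.1 k'| ≤ |M.τ| + |1 - M.τ| * Cq := by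
        calc |M.τ + (1 - M.τ) * q z p'.1 k'| ≤ |M.τ| + |(1 - M.τ) * q z p'.1 k'| :=
              abs_add_le _ _
          _ = |M.τ| + |1 - M.τ| * |q z p'.1 k'| := by rw [abs_mul]
          _ ≤ |M.τ| + |1 - M.τ| * Cq :=
              add_le_add_right (mul_le_mul_of_nonneg_left (hCq _ _ _) (abs_nonneg _)) _
      have hQb : (M.τ + (1 - M.τ) * q z p'.1 k') * p'.1 ≤
          (|M.τ| + |1 - M.τ| * Cq) * (|M.bLow| + |M.bHigh|) := by
        calc (M.τ + (1 - M.τ) * q z p'.1 k') * p'.1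
            ≤ |(M.τ + (1 - M.τ) * q z p'.1 k') * p'.1| := le_abs_self _
          _ = |M.τ + (1 - M.τ) * q z p'.1 k'| * |p'.1| := abs_mul _ _
          _ ≤ (|M.τ| + |1 - M.τ| * Cq) * (|M.bLow| + |M.bHigh|) :=
              mul_le_mul hQ hb'abs (abs_nonneg _) (le_trans (abs_nonneg _) hQ)
      have hEV := hEVb z p'.1 k'
      have hEV' : M.β * M.EV V z p'.1 k' ≤ M.β * Cv :=
        mul_le_mul_of_nonneg_left (le_trans (le_abs_self _) hEV) hβ0
      have hbud' : (1 - M.τ) * M.F z k + M.τ * M.δ * k +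
          (M.τ + (1 - M.τ) * q z p'.1 k') * p'.1 - b₂ = p'.2.1 + p'.2.2 := hbud
      show M.Payoff V (z, b₂, k) p' ≤ _
      unfold TradeoffModel.Payoff
      dsimp only
      rw [← hk']
      linarith
    have hmem : V z b₁ k + (b₁ - b₂) ∈ {v | ∃ p, M.PolicyFeasible q (z, b₂, k) p ∧
        v = M.Payoff V (z, b₂, k) p} := by
      refine ⟨(p.1, p.2.1 + (b₁ - b₂), p.2.2), ?_, ?_⟩
      · obtain ⟨hbb, hd, hi, hbud⟩ := hpf
        refine ⟨hbb, ?_, hi, ?_⟩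
        · dsimp only; linarith
        · have hbud' : (1 - M.τ) * M.F z k + M.τ * M.δ * k +
              (M.τ + (1 - M.τ) * q z p.1 ((1 - M.δ) * k + p.2.2)) * p.1 - b₁
              = p.2.1 + p.2.2 := hbud
          show (1 - M.τ) * M.F z k + M.τ * M.δ * k +
              (M.τ + (1 - M.τ) * q z p.1 ((1 - M.δ) * k + p.2.2)) * p.1 - b₂
              = (p.2.1 + (b₁ - b₂)) + p.2.2
          linarith
      · have hpay' : p.2.1 + M.β * M.EV V z p.1 ((1 - M.δ) * k + p.2.2) = V z b₁ k := hpay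
        show V z b₁ k + (b₁ - b₂)
            = (p.2.1 + (b₁ - b₂)) + M.β * M.EV V z p.1 ((1 - M.δ) * k + p.2.2)
        linarith
    have hle := le_csSup hbdd hmem
    have hV2' : V z b₂ k = sSup {v | ∃ p, M.PolicyFeasible q (z, b₂, k) p ∧
        v = M.Payoff V (z, b₂, k) p} := hV2
    rw [← hV2'] at hle
    linarith
  -- characterize the interval
  have hsetL : {b | M.bLow ≤ b ∧ M.Feas q (z, b, k)} = {b | M.Feas q (z, b, k)} := by
    ext b
    simp only [Set.mem_setOf_eq, and_iff_right_iff_imp]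
    exact fun h => h.2.1.1
  have hsetH : {b | b ≤ M.bHigh ∧ M.Feas q (z, b, k)} = {b | M.Feas q (z, b, k)} := by
    ext b
    simp only [Set.mem_setOf_eq, and_iff_right_iff_imp]
    exact fun h => h.2.1.2
  have hLo : M.bLowFn q z k = sInf {b | M.Feas q (z, b, k)} := by
    rw [TradeoffModel.bLowFn, hsetL]
  have hHi : M.bHighFn q z k = sSup {b | M.Feas q (z, b, k)} := by
    rw [TradeoffModel.bHighFn, hsetH]
  rcases Set.eq_empty_or_nonempty {b | M.Feas q (z, b, k)} with he | ⟨b₀, hb₀⟩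
  · rw [he] at hLo hHi
    rw [Real.sInf_empty] at hLo
    rw [Real.sSup_empty] at hHi
    constructor
    · intro a ha b hb hab
      rw [hLo, hHi] at ha hb
      have e1 : a = 0 := le_antisymm ha.2 ha.1
      have e2 : b = 0 := le_antisymm hb.2 hb.1
      exfalso; rw [e1, e2] at hab; exact lt_irrefl 0 hab
    · intro b₁ b₂ h1 h2 hlt
      rw [hLo, hHi] at h1 h2
      have e1 : b₁ = 0 := le_antisymm h1.2 h1.1
      have e2 : b₂ = 0 := le_antisymm h2.2 h2.1
      exfalso; rw [e1, e2] at hlt; exact lt_irrefl 0 hlt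
  · have hfeasAll : ∀ b ∈ Set.Icc (M.bLowFn q z k) (M.bHighFn q z k),
        M.Feas q (z, b, k) := by
      intro b hb
      have hlow : M.bLow ≤ M.bLowFn q z k := by
        rw [hLo]
        exact le_csInf ⟨b₀, hb₀⟩ fun x hx => hx.2.1.1
      have hhigh1 : M.bHighFn q z k ≤ M.bHigh := by
        rw [hHi]
        exact csSup_le ⟨b₀, hb₀⟩ fun x hx => hx.2.1.2
      have hhigh2 : M.bHighFn q z k ≤ M.R z k + M.S q z k := by
        rw [hHi]
        exact csSup_le ⟨b₀, hb₀⟩ fun x hx => hx.2.2.2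
      exact ⟨hb₀.1, ⟨le_trans hlow hb.1, le_trans hb.2 hhigh1⟩, hb₀.2.2.1,
        le_trans hb.2 hhigh2⟩
    constructor
    · intro a ha b hb hab
      have h := key b a (hfeasAll b hb) (hfeasAll a ha) hab
      dsimp only
      linarith
    · intro b₁ b₂ h1 h2 hlt
      exact key b₁ b₂ (hfeasAll b₁ h1) (hfeasAll b₂ h2) hlt
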